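/- Let k be a field of characteristic 0 and let 𝔨 be a Lie subalgebra of the Witt algebra W = k[t,t⁻¹]∂ (with bracket [f∂, g∂] = (fg'−f'g)∂). Suppose f, g ∈ k[t,t⁻¹] are such that 𝔨 contains f·r·∂ for all r ∈ k[t,t⁻¹], and g∂ ∈ 𝔨. Then 𝔨 contains g·f'·r·∂ for all r ∈ k[t,t⁻¹]. -/

import Mathlib

/-- Formal derivative on Laurent polynomials, sending `tⁿ` to `n·tⁿ⁻¹`. -/
noncomputable def lderiv {k : Type*} [CommRing k] (f : LaurentPolynomial k) : LaurentPolynomial k :=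
  AddMonoidAlgebra.ofCoeff (Finsupp.sum f.coeff fun n a => Finsupp.single (n - 1) ((n : k) * a))

lemma lderiv_single {k : Type*} [CommRing k] (n : ℤ) (a : k) :
    lderiv (AddMonoidAlgebra.single n a : LaurentPolynomial k)
      = AddMonoidAlgebra.single (n - 1) ((n : k) * a) := by
  unfold lderiv
  exact congrArg AddMonoidAlgebra.ofCoeff (Finsupp.sum_single_index (by simp))

lemma lderiv_add {k : Type*} [CommRing k] (f g : LaurentPolynomial k) :
    lderiv (f + g) = lderiv f + lderiv g := by
  unfold lderiv
  rw [AddMonoidAlgebra.coeff_add, ← AddMonoidAlgebra.ofCoeff_add]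
  exact congrArg AddMonoidAlgebra.ofCoeff
    (Finsupp.sum_add_index (by simp) (by intros; rw [mul_add, Finsupp.single_add]))

lemma lderiv_mul {k : Type*} [CommRing k] (f g : LaurentPolynomial k) :
    lderiv (f * g) = f * lderiv g + lderiv f * g := by
  induction f using AddMonoidAlgebra.induction_linear with
  | zero => simp [lderiv]
  | add a b ha hb => rw [add_mul, lderiv_add, ha, hb, lderiv_add]; ring
  | single n a =>
    induction g using AddMonoidAlgebra.induction_linear with
    | zero => simp [lderiv]
    | add c d hc hd => rw [mul_add, lderiv_add, hc, hd, lderiv_add]; ring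
    | single m b =>
      show lderiv ((AddMonoidAlgebra.single n a : LaurentPolynomial k)
            * AddMonoidAlgebra.single m b)
        = (AddMonoidAlgebra.single n a : LaurentPolynomial k)
            * lderiv (AddMonoidAlgebra.single m b : LaurentPolynomial k)
          + lderiv (AddMonoidAlgebra.single n a : LaurentPolynomial k)
            * AddMonoidAlgebra.single m b
      rw [AddMonoidAlgebra.single_mul_single, lderiv_single, lderiv_single, lderiv_single,
        AddMonoidAlgebra.single_mul_single, AddMonoidAlgebra.single_mul_single]
      have h1 : n + (m - 1) = n + m - 1 := by ring
      have h2 : n - 1 + m = n + m - 1 := by ring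
      rw [h1, h2]
      show (AddMonoidAlgebra.single (n + m - 1) (((n + m : ℤ) : k) * (a * b)) : LaurentPolynomial k)
        = AddMonoidAlgebra.single (n + m - 1) (a * ((m : k) * b)) + AddMonoidAlgebra.single (n + m - 1) ((n : k) * a * b)
      rw [← AddMonoidAlgebra.single_add]
      congr 1
      push_cast
      ring

/-- Let `𝔨` be a Lie subalgebra of the Witt algebra `W = k[t,t⁻¹]∂` (identified with
`k[t,t⁻¹]` with bracket `[f,g] = fg' − f'g`).  If `W(f) = f·k[t,t⁻¹] ⊆ 𝔨` and `g ∈ 𝔨`,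
then `W(g·f') ⊆ 𝔨`. -/
theorem witt_subalgebra_contains {k : Type*} [Field k] [CharZero k]
    (𝔨 : Submodule k (LaurentPolynomial k))
    (hLie : ∀ a ∈ 𝔨, ∀ b ∈ 𝔨, a * lderiv b - lderiv a * b ∈ 𝔨)
    (f g : LaurentPolynomial k)
    (hf : ∀ r : LaurentPolynomial k, f * r ∈ 𝔨)
    (hg : g ∈ 𝔨) :
    ∀ r : LaurentPolynomial k, g * lderiv f * r ∈ 𝔨 := by
  intro r
  have hbr := hLie (f * r) (hf r) g hg
  have key : g * lderiv f * r
      = f * (r * lderiv g) - f * (lderiv r * g) - (f * r * lderiv g - lderiv (f * r) * g) := by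
    rw [lderiv_mul]; ring
  rw [key]
  exact 𝔨.sub_mem (𝔨.sub_mem (hf (r * lderiv g)) (hf (lderiv r * g))) hbr
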